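/- Let x ∈ [0,1]^d and suppose for some odd-sized set V ⊆ {1,…,d} the forbidden-set inequality Σ_{i∈V} xᵢ - Σ_{i∉V} xᵢ ≤ |V| - 1 is violated. Then for every other odd-sized set W ≠ V, the forbidden-set inequality Σ_{i∈W} xᵢ - Σ_{i∉W} xᵢ < |W| - 1 holds strictly. -/

import Mathlib

open Finset

/-- Squared Euclidean distance on `Fin d → ℝ`. -/
noncomputable def sqdist {d : ℕ} (x y : Fin d → ℝ) : ℝ := ∑ i, (x i - y i) ^ 2

/-- `z` is the Euclidean (nearest-point) projection of `x` onto `S`. -/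
def IsProj {d : ℕ} (S : Set (Fin d → ℝ)) (x z : Fin d → ℝ) : Prop :=
  z ∈ S ∧ ∀ y ∈ S, sqdist x z ≤ sqdist x y

/-- The even parity polytope: convex hull of 0/1 vectors with an even number of ones. -/
noncomputable def PEven (d : ℕ) : Set (Fin d → ℝ) :=
  convexHull ℝ {x | ∃ S : Finset (Fin d), Even S.card ∧ ∀ i, x i = if i ∈ S then 1 else 0}

/-- The odd parity polytope: convex hull of 0/1 vectors with an odd number of ones. -/
noncomputable def POdd (d : ℕ) : Set (Fin d → ℝ) :=
  convexHull ℝ {x | ∃ S : Finset (Fin d), Odd S.card ∧ ∀ i, x i = if i ∈ S then 1 else 0}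

lemma slack_sum (d : ℕ) (x : Fin d → ℝ) (S : Finset (Fin d)) :
    ∑ i ∈ S, x i - ∑ i ∈ Sᶜ, x i
      = (S.card : ℝ) - ∑ i, (if i ∈ S then 1 - x i else x i) := by
  rw [← Finset.sum_add_sum_compl S (fun i => if i ∈ S then 1 - x i else x i)]
  rw [Finset.sum_congr rfl (fun i hi => if_pos hi),
    Finset.sum_congr rfl (fun i (hi : i ∈ Sᶜ) => if_neg (Finset.mem_compl.mp hi))]
  rw [Finset.sum_sub_distrib, Finset.sum_const, nsmul_eq_mul, mul_one]
  ring

theorem at_most_one_odd_cut (d : ℕ) (x : Fin d → ℝ)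
    (hx : ∀ i, 0 ≤ x i ∧ x i ≤ 1)
    (V : Finset (Fin d)) (hV : Odd V.card)
    (hcut : (V.card : ℝ) - 1 < ∑ i ∈ V, x i - ∑ i ∈ Vᶜ, x i) :
    ∀ W : Finset (Fin d), Odd W.card → W ≠ V →
      ∑ i ∈ W, x i - ∑ i ∈ Wᶜ, x i < (W.card : ℝ) - 1 := by
  intro W hW hne
  set tV : Fin d → ℝ := fun i => if i ∈ V then 1 - x i else x i with htV
  set tW : Fin d → ℝ := fun i => if i ∈ W then 1 - x i else x i with htW
  have hnnV : ∀ i, 0 ≤ tV i := by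
    intro i; simp only [htV]; split
    · linarith [(hx i).2]
    · exact (hx i).1
  have hnnW : ∀ i, 0 ≤ tW i := by
    intro i; simp only [htW]; split
    · linarith [(hx i).2]
    · exact (hx i).1
  have hV1 : ∑ i, tV i < 1 := by
    have := slack_sum d x V
    rw [this] at hcut; linarith
  rw [slack_sum d x W]
  -- symmetric difference
  have hDne : (symmDiff V W).Nonempty := by
    rw [Finset.nonempty_iff_ne_empty]
    intro h
    exact hne (symmDiff_eq_bot.mp h).symm
  have hDcard : 2 ≤ (symmDiff V W).card := by
    have hdisj : Disjoint (V \ W) (W \ V) := disjoint_sdiff_sdiff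
    have hcard : (symmDiff V W).card = (V \ W).card + (W \ V).card := by
      rw [symmDiff_def, Finset.sup_eq_union, Finset.card_union_of_disjoint hdisj]
    have h1 : (V \ W).card + (V ∩ W).card = V.card := by
      rw [Finset.card_sdiff_add_card_inter]
    have h2 : (W \ V).card + (W ∩ V).card = W.card := by
      rw [Finset.card_sdiff_add_card_inter]
    have hVW : (V ∩ W).card = (W ∩ V).card := by rw [Finset.inter_comm]
    obtain ⟨a, ha⟩ := hV
    obtain ⟨b, hb⟩ := hW
    have h0 : (symmDiff V W).card ≠ 0 := by
      simpa [Finset.card_eq_zero, ← Finset.nonempty_iff_ne_empty] using hDne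
    omega
  have hflip : ∀ i ∈ symmDiff V W, tW i = 1 - tV i := by
    intro i hi
    rw [Finset.mem_symmDiff] at hi
    rcases hi with ⟨hiV, hiW⟩ | ⟨hiW, hiV⟩
    · simp only [htV, htW, if_pos hiV, if_neg hiW]; ring
    · simp only [htV, htW, if_pos hiW, if_neg hiV]
  have h1 : ∑ i ∈ symmDiff V W, tW i ≤ ∑ i, tW i :=
    Finset.sum_le_sum_of_subset_of_nonneg (Finset.subset_univ _) (fun i _ _ => hnnW i)
  have h2 : ∑ i ∈ symmDiff V W, tV i ≤ ∑ i, tV i :=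
    Finset.sum_le_sum_of_subset_of_nonneg (Finset.subset_univ _) (fun i _ _ => hnnV i)
  have h3 : ∑ i ∈ symmDiff V W, tW i = ((symmDiff V W).card : ℝ) - ∑ i ∈ symmDiff V W, tV i := by
    rw [Finset.sum_congr rfl hflip, Finset.sum_sub_distrib, Finset.sum_const,
      nsmul_eq_mul, mul_one]
  have hcardR : (2 : ℝ) ≤ ((symmDiff V W).card : ℝ) := by exact_mod_cast hDcard
  linarith
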